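/- Let G be a finite simple connected graph on vertex set V, c : V → ℝ, and H a spanning subgraph of G whose connected components have vertex sets C_1, …, C_m. Then the connectedness LP associated with (H, c) is feasible, its optimum is attained, and its optimal value satisfies val(H, c) = Σ_{i=1}^m |Σ_{v∈C_i} c(v)|. -/

import Mathlib

open Matrix Finset
open scoped Classical

section ConnLPAux

variable {V : Type} [Fintype V] [DecidableEq V]

/-- Column sums of the Laplacian over a connected component vanish. -/
lemma connLP_lap_col_sum (H : SimpleGraph V) (C : H.ConnectedComponent) (u : V) :
    ∑ v ∈ C.supp.toFinset, H.lapMatrix ℝ v u = 0 := by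
  have hmem : ∀ v : V, v ∈ C.supp.toFinset ↔ H.connectedComponentMk v = C := by
    intro v; simp [SimpleGraph.ConnectedComponent.mem_supp_iff]
  simp only [SimpleGraph.lapMatrix, SimpleGraph.degMatrix, Matrix.sub_apply,
    Matrix.diagonal_apply, SimpleGraph.adjMatrix_apply, Finset.sum_sub_distrib]
  by_cases hu : H.connectedComponentMk u = C
  · have h1 : ∑ v ∈ C.supp.toFinset, (if v = u then (H.degree v : ℝ) else 0)
        = H.degree u := by
      rw [Finset.sum_ite_eq' C.supp.toFinset u (fun v => (H.degree v : ℝ))]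
      simp [hmem, hu]
    have h2 : ∑ v ∈ C.supp.toFinset, (if H.Adj v u then (1:ℝ) else 0)
        = H.degree u := by
      rw [Finset.sum_subset (Finset.subset_univ C.supp.toFinset) (by
        intro v _ hv
        have : ¬ H.Adj v u := by
          intro hadj
          exact hv ((hmem v).mpr (by rw [SimpleGraph.ConnectedComponent.eq.mpr hadj.reachable, hu]))
        simp [this])]
      rw [show (∑ v : V, if H.Adj v u then (1:ℝ) else 0)
            = ∑ v : V, if H.Adj u v then (1:ℝ) else 0 by
          apply Finset.sum_congr rfl; intro v _; rw [SimpleGraph.adj_comm]]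
      exact (SimpleGraph.degree_eq_sum_if_adj H u).symm
    rw [h1, h2, sub_self]
  · have h1 : ∑ v ∈ C.supp.toFinset, (if v = u then (H.degree v : ℝ) else 0) = 0 := by
      rw [Finset.sum_ite_eq' C.supp.toFinset u (fun v => (H.degree v : ℝ))]
      simp [hmem, hu]
    have h2 : ∑ v ∈ C.supp.toFinset, (if H.Adj v u then (1:ℝ) else 0) = 0 := by
      apply Finset.sum_eq_zero
      intro v hv
      have : ¬ H.Adj v u := by
        intro hadj
        exact hu (by rw [← SimpleGraph.ConnectedComponent.eq.mpr hadj.reachable, (hmem v).mp hv])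
      simp [this]
    rw [h1, h2, sub_self]

/-- Sums of `L_H θ` over a connected component vanish. -/
lemma connLP_lap_comp_sum (H : SimpleGraph V) (C : H.ConnectedComponent) (θ : V → ℝ) :
    ∑ v ∈ C.supp.toFinset, (H.lapMatrix ℝ *ᵥ θ) v = 0 := by
  simp only [Matrix.mulVec, dotProduct]
  rw [Finset.sum_comm]
  apply Finset.sum_eq_zero
  intro u _
  rw [← Finset.sum_mul, connLP_lap_col_sum H C u, zero_mul]

/-- Connected components partition the vertex set. -/
lemma connLP_sum_partition (H : SimpleGraph V) (f : V → ℝ) :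
    ∑ C : H.ConnectedComponent, ∑ v ∈ C.supp.toFinset, f v = ∑ v, f v := by
  have h : ∀ C : H.ConnectedComponent,
      C.supp.toFinset = Finset.univ.filter (fun v => H.connectedComponentMk v = C) := by
    intro C; ext v; simp [SimpleGraph.ConnectedComponent.mem_supp_iff]
  simp_rw [h]
  exact Finset.sum_fiberwise _ _ _

/-- A representative of each connected component. -/
noncomputable def connLPRep (H : SimpleGraph V) (C : H.ConnectedComponent) : V :=
  (Quot.exists_rep C).choose

omit [Fintype V] [DecidableEq V] in
lemma connLPRep_spec (H : SimpleGraph V) (C : H.ConnectedComponent) :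
    H.connectedComponentMk (connLPRep H C) = C := (Quot.exists_rep C).choose_spec

/-- Summing a function concentrated at the component representatives over a component
picks out the value at that component. -/
lemma connLP_sum_rep (H : SimpleGraph V) (C : H.ConnectedComponent)
    (h : H.ConnectedComponent → ℝ) :
    ∑ v ∈ C.supp.toFinset,
      (if v = connLPRep H (H.connectedComponentMk v)
        then h (H.connectedComponentMk v) else 0) = h C := by
  have hmem : ∀ v : V, v ∈ C.supp.toFinset ↔ H.connectedComponentMk v = C := by
    intro v; simp [SimpleGraph.ConnectedComponent.mem_supp_iff]
  rw [Finset.sum_congr rfl (fun v hv => by rw [(hmem v).mp hv])]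
  rw [Finset.sum_ite_eq' C.supp.toFinset (connLPRep H C) (fun _ => h C)]
  simp [hmem, connLPRep_spec]

/-- The component-sums linear map. -/
noncomputable def connLPPhi (H : SimpleGraph V) :
    (V → ℝ) →ₗ[ℝ] (H.ConnectedComponent → ℝ) where
  toFun f := fun C => ∑ v ∈ C.supp.toFinset, f v
  map_add' f g := by ext C; simp [Finset.sum_add_distrib]
  map_smul' r f := by ext C; simp [Finset.mul_sum]

/-- Any vector whose sums over each connected component vanish lies in the range of
the Laplacian. -/
lemma connLP_exists_theta (H : SimpleGraph V) (f : V → ℝ) (hf : connLPPhi H f = 0) :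
    ∃ θ : V → ℝ, H.lapMatrix ℝ *ᵥ θ = f := by
  have hsurj : Function.Surjective (connLPPhi H) := by
    intro a
    refine ⟨fun v => if v = connLPRep H (H.connectedComponentMk v)
      then a (H.connectedComponentMk v) else 0, ?_⟩
    ext C
    exact connLP_sum_rep H C a
  have hle : LinearMap.range (Matrix.toLin' (H.lapMatrix ℝ)) ≤ LinearMap.ker (connLPPhi H) := by
    rintro _ ⟨θ, rfl⟩
    rw [LinearMap.mem_ker]
    ext C
    show ∑ v ∈ C.supp.toFinset, (Matrix.toLin' (H.lapMatrix ℝ) θ) v = 0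
    rw [Matrix.toLin'_apply]
    exact connLP_lap_comp_sum H C θ
  have hrank : Module.finrank ℝ (LinearMap.range (Matrix.toLin' (H.lapMatrix ℝ)))
      = Fintype.card V - Fintype.card H.ConnectedComponent := by
    have h1 := LinearMap.finrank_range_add_finrank_ker (Matrix.toLin' (H.lapMatrix ℝ))
    rw [Module.finrank_fintype_fun_eq_card] at h1
    rw [← SimpleGraph.card_connectedComponent_eq_finrank_ker_toLin'_lapMatrix] at h1
    omega
  have hker : Module.finrank ℝ (LinearMap.ker (connLPPhi H))
      = Fintype.card V - Fintype.card H.ConnectedComponent := by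
    have h1 := LinearMap.finrank_range_add_finrank_ker (connLPPhi H)
    rw [Module.finrank_fintype_fun_eq_card, LinearMap.range_eq_top.mpr hsurj] at h1
    rw [finrank_top, Module.finrank_fintype_fun_eq_card] at h1
    have hle' : Fintype.card H.ConnectedComponent ≤ Fintype.card V :=
      Fintype.card_le_of_surjective _ (fun C => Quot.exists_rep C)
    omega
  have heq : LinearMap.range (Matrix.toLin' (H.lapMatrix ℝ)) = LinearMap.ker (connLPPhi H) :=
    Submodule.eq_of_le_of_finrank_le hle (le_of_eq (hker.trans hrank.symm))
  have hmem : f ∈ LinearMap.range (Matrix.toLin' (H.lapMatrix ℝ)) :=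
    heq ▸ LinearMap.mem_ker.mpr hf
  obtain ⟨θ, hθ⟩ := hmem
  exact ⟨θ, by rw [← Matrix.toLin'_apply]; exact hθ⟩

end ConnLPAux

/-- For a finite simple connected graph `G`, a spanning subgraph `H ≤ G`, and
`c : V → ℝ`, the connectedness LP (minimize `Σ (d₊ + d₋)` over `θ, d₊ ≥ 0, d₋ ≥ 0` subject to
`L_H θ = c + d₊ − d₋`) is feasible, its optimum is attained, and its optimal value equals
`Σ_{components C of H} |Σ_{v ∈ C} c v|`: i.e. that number is the least element of the set of
attainable objective values. -/
theorem connectedness_lp_value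
    {V : Type} [Fintype V] [DecidableEq V]
    (G H : SimpleGraph V) (hG : G.Connected) (hHG : H ≤ G)
    (c : V → ℝ) :
    IsLeast
      {x : ℝ | ∃ θ dp dm : V → ℝ, (∀ v, 0 ≤ dp v) ∧ (∀ v, 0 ≤ dm v) ∧
        H.lapMatrix ℝ *ᵥ θ = c + dp - dm ∧ x = ∑ v, (dp v + dm v)}
      (∑ C : H.ConnectedComponent, |∑ v ∈ C.supp.toFinset, c v|) := by
  set S : H.ConnectedComponent → ℝ := fun C => ∑ v ∈ C.supp.toFinset, c v with hS
  constructor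
  · -- membership: construct an optimal solution
    set g : V → ℝ := fun v =>
      if v = connLPRep H (H.connectedComponentMk v) then S (H.connectedComponentMk v) else 0
      with hg
    have hgsum : ∀ C : H.ConnectedComponent, ∑ v ∈ C.supp.toFinset, g v = S C :=
      fun C => connLP_sum_rep H C S
    have hPhi : connLPPhi H (c - g) = 0 := by
      ext C
      show ∑ v ∈ C.supp.toFinset, (c - g) v = 0
      simp only [Pi.sub_apply, Finset.sum_sub_distrib]
      rw [hgsum C]
      simp [hS]
    obtain ⟨θ, hθ⟩ := connLP_exists_theta H (c - g) hPhi
    refine ⟨θ, fun v => (|g v| - g v) / 2, fun v => (|g v| + g v) / 2,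
      fun v => by dsimp only; have := le_abs_self (g v); linarith,
      fun v => by dsimp only; have := neg_abs_le (g v); linarith, ?_, ?_⟩
    · rw [hθ]; ext v; simp only [Pi.sub_apply, Pi.add_apply]; ring
    · have habs : ∀ v, (|g v| - g v) / 2 + (|g v| + g v) / 2 = |g v| := fun v => by ring
      simp_rw [habs]
      rw [← connLP_sum_partition H (fun v => |g v|)]
      apply Finset.sum_congr rfl
      intro C _
      rw [show ∑ v ∈ C.supp.toFinset, |g v| = |S C| from ?_]
      · have : ∀ v : V, |g v| =
            if v = connLPRep H (H.connectedComponentMk v)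
              then |S (H.connectedComponentMk v)| else 0 := by
          intro v
          show |if v = connLPRep H (H.connectedComponentMk v)
              then S (H.connectedComponentMk v) else 0| = _
          by_cases hv : v = connLPRep H (H.connectedComponentMk v)
          · rw [if_pos hv, if_pos hv]
          · rw [if_neg hv, if_neg hv, abs_zero]
        simp_rw [this]
        exact connLP_sum_rep H C (fun C => |S C|)
  · -- lower bound
    rintro x ⟨θ, dp, dm, hdp, hdm, hL, rfl⟩
    have key : ∀ C : H.ConnectedComponent,
        |S C| ≤ ∑ v ∈ C.supp.toFinset, (dp v + dm v) := by
      intro C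
      have h0 : ∑ v ∈ C.supp.toFinset, (c v + dp v - dm v) = 0 := by
        have := connLP_lap_comp_sum H C θ
        rw [hL] at this
        simpa using this
      have hSc : S C = ∑ v ∈ C.supp.toFinset, (dm v - dp v) := by
        simp only [Finset.sum_sub_distrib, Finset.sum_add_distrib] at h0 ⊢
        simp only [hS]
        linarith
      rw [hSc]
      calc |∑ v ∈ C.supp.toFinset, (dm v - dp v)|
          ≤ ∑ v ∈ C.supp.toFinset, |dm v - dp v| := Finset.abs_sum_le_sum_abs _ _
        _ ≤ ∑ v ∈ C.supp.toFinset, (dp v + dm v) := by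
            apply Finset.sum_le_sum
            intro v _
            have h1 := hdp v
            have h2 := hdm v
            rw [abs_sub_le_iff]
            constructor <;> linarith
    calc ∑ C : H.ConnectedComponent, |S C|
        ≤ ∑ C : H.ConnectedComponent, ∑ v ∈ C.supp.toFinset, (dp v + dm v) :=
          Finset.sum_le_sum (fun C _ => key C)
      _ = ∑ v, (dp v + dm v) := connLP_sum_partition H _
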